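/- For 0 < \u03b1 < 1 set \u03b2 = \u221a(1 - \u03b1\u00b2) and define \u03c6_\u03b1 : T_3 \u2192 M_9(\u2102) to be the linear map sending the upper triangular matrix with diagonal entries a, b, c and strictly upper entries x (position (1,2)), y (position (2,3)), z (position (1,3)) to the 9-by-9 matrix whose only nonzero entries are: (3,3) = a, (4,4) = a, (5,5) = b, (7,7) = b, (8,8) = c, (9,9) = c, (3,5) = \u03b1 x, (3,7) = \u03b2 x, (4,5) = -\u03b2 x, (4,7) = \u03b1 x, (5,8) = \u03b1 y, (5,9) = -\u03b2 y, (7,8) = \u03b2 y, (7,9) = \u03b1 y, (3,8) = z, (4,9) = z. Then for \u03b1 \u2260 \u03b3 with 0 < \u03b1, \u03b3 < 1, the maps \u03c6_\u03b1 and \u03c6_\u03b3 are not inner unitarily equivalent: there is no unitary u in M_9(\u2102) of block diagonal form u = u_1 \u2295 u_2 \u2295 u_3 with 3-by-3 unitary blocks such that \u03c6_\u03b3(X) = u \u03c6_\u03b1(X) u\u1d34 for all X in T_3. -/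

import Mathlib

open Matrix

/-- The star-extendible embedding `φ_α : T₃ → T₃ ⊗ M₃ ⊆ M₉(ℂ)` of Example 3.6, defined on an
upper triangular matrix `X` with diagonal entries `a, b, c` and strictly upper entries
`x = X 0 1`, `y = X 1 2`, `z = X 0 2`, with `β = √(1 - α²)`.  (Indices are 0-based, so e.g.
the entry `(3,3) = a` of the paper becomes `(2,2) = a` here.) -/
noncomputable def phiAlpha (α : ℝ) (X : Matrix (Fin 3) (Fin 3) ℂ) : Matrix (Fin 9) (Fin 9) ℂ :=
  let β : ℂ := (Real.sqrt (1 - α ^ 2) : ℝ)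
  let E : Fin 9 → Fin 9 → Matrix (Fin 9) (Fin 9) ℂ := fun p q => Matrix.single p q 1
  X 0 0 • (E 2 2 + E 3 3) + X 1 1 • (E 4 4 + E 6 6) + X 2 2 • (E 7 7 + E 8 8) +
    X 0 1 • ((α : ℂ) • (E 2 4 + E 3 6) + β • E 2 6 - β • E 3 4) +
    X 1 2 • ((α : ℂ) • (E 4 7 + E 6 8) - β • E 4 8 + β • E 6 7) +
    X 0 2 • (E 2 7 + E 3 8)

/-- The block diagonal `9 × 9` matrix `u₀ ⊕ u₁ ⊕ u₂` built from three `3 × 3` blocks. -/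
def blockDiag3 (u : Fin 3 → Matrix (Fin 3) (Fin 3) ℂ) : Matrix (Fin 9) (Fin 9) ℂ :=
  Matrix.of fun p q =>
    if h : (p : ℕ) / 3 = (q : ℕ) / 3 then
      u ⟨(p : ℕ) / 3, by omega⟩ ⟨(p : ℕ) % 3, by omega⟩ ⟨(q : ℕ) % 3, by omega⟩
    else 0

set_option maxHeartbeats 2000000 in
/-- For `0 < α, γ < 1` with `α ≠ γ`, the maps `φ_α` and `φ_γ` are not inner unitarily
equivalent: no unitary of the block diagonal form `u₀ ⊕ u₁ ⊕ u₂` with `3 × 3` unitary blocks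
conjugates `φ_α(X)` to `φ_γ(X)` for all upper triangular `X`. -/
theorem phiAlpha_not_inner_conjugate (α γ : ℝ)
    (hα0 : 0 < α) (hα1 : α < 1) (hγ0 : 0 < γ) (hγ1 : γ < 1) (hne : α ≠ γ) :
    ¬ ∃ u : Fin 3 → Matrix (Fin 3) (Fin 3) ℂ,
        (∀ i, (u i)ᴴ * u i = 1 ∧ u i * (u i)ᴴ = 1) ∧
        ∀ X : Matrix (Fin 3) (Fin 3) ℂ, (∀ p q : Fin 3, (q : ℕ) < (p : ℕ) → X p q = 0) →
          phiAlpha γ X = blockDiag3 u * phiAlpha α X * (blockDiag3 u)ᴴ := by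
  rintro ⟨u, -, hconj⟩
  have hup : ∀ i j : Fin 3, (i : ℕ) ≤ (j : ℕ) → ∀ p q : Fin 3,
      (q : ℕ) < (p : ℕ) → Matrix.single i j (1:ℂ) p q = 0 := by
    intro i j hij p q hpq
    simp only [Matrix.single, Matrix.of_apply, ite_eq_right_iff]
    rintro ⟨rfl, rfl⟩
    omega
  have key : ∀ X : Matrix (Fin 3) (Fin 3) ℂ, (∀ p q : Fin 3, (q : ℕ) < (p : ℕ) → X p q = 0) →
      ∀ p q : Fin 9, phiAlpha γ X p q = (blockDiag3 u * phiAlpha α X * (blockDiag3 u)ᴴ) p q :=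
    fun X hX p q => congrFun (congrFun (hconj X hX) p) q
  have h1 := key (Matrix.single 0 0 1) (fun p q h => hup 0 0 (by norm_num) p q h) 3 3
  have h2 := key (Matrix.single 1 1 1) (fun p q h => hup 1 1 (by norm_num) p q h) 4 4
  have h3 := key (Matrix.single 0 1 1) (fun p q h => hup 0 1 (by norm_num) p q h) 3 4
  simp (config := { decide := true }) [phiAlpha, blockDiag3, Matrix.mul_apply,
    Matrix.conjTranspose_apply, Fin.sum_univ_succ, Matrix.single,
    Matrix.of_apply] at h1 h2 h3
  norm_num [show ((3:Fin 9):ℕ) = 3 from rfl, show ((4:Fin 9):ℕ) = 4 from rfl,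
    Fin.mk_zero, Fin.mk_one] at h1 h2 h3
  have ha : ‖u 1 0 0‖ = 1 := by
    have h := congrArg (‖·‖) h1
    simp only [norm_one, norm_mul, Complex.norm_conj] at h
    nlinarith [norm_nonneg (u 1 0 0)]
  have hb : ‖u 1 1 1‖ = 1 := by
    have h := congrArg (‖·‖) h2
    simp only [norm_one, norm_mul, Complex.norm_conj] at h
    nlinarith [norm_nonneg (u 1 1 1)]
  have h4 := congrArg (‖·‖) h3
  simp only [norm_mul, Complex.norm_conj, ha, hb, Complex.norm_real, Real.norm_eq_abs, one_mul, mul_one] at h4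
  rw [abs_of_nonneg (Real.sqrt_nonneg _), abs_of_nonneg (Real.sqrt_nonneg _)] at h4
  have hγ2 : (0:ℝ) ≤ 1 - γ^2 := by nlinarith
  have hα2 : (0:ℝ) ≤ 1 - α^2 := by nlinarith
  have h5 : 1 - γ^2 = 1 - α^2 := by
    have := congrArg (fun t => t^2) h4
    simpa [Real.sq_sqrt hγ2, Real.sq_sqrt hα2] using this
  have h6 : (α - γ) * (α + γ) = 0 := by nlinarith
  rcases mul_eq_zero.1 h6 with h | h
  · exact hne (by linarith)
  · linarith
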